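/- Let G be a prime graph and let α be a vertex not in V(G). Let H be a graph on V(G) ∪ {α} with H[V(G)] = G. If N_H(α) is not ∅, not V(G), and differs from N_G(v) and from N_G(v) ∪ {v} for every v ∈ V(G), then H is prime. -/

import Mathlib

/-- `M` is a module of `G`: every vertex outside `M` is adjacent to all of `M` or to none. -/
def IsModule {V : Type*} (G : SimpleGraph V) (M : Set V) : Prop :=
  ∀ v ∉ M, (∀ m ∈ M, G.Adj v m) ∨ (∀ m ∈ M, ¬ G.Adj v m)

/-- `G` is prime: at least 4 vertices and only trivial modules. -/
def IsPrimeGraph {V : Type*} (G : SimpleGraph V) : Prop :=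
  4 ≤ Nat.card V ∧ ∀ M : Set V, IsModule G M → M = Set.univ ∨ M.Subsingleton

theorem prime_one_extension {V : Type*} [Finite V] (G : SimpleGraph V)
    (hG : IsPrimeGraph G) (H : SimpleGraph (V ⊕ Unit))
    (hext : ∀ a b : V, H.Adj (Sum.inl a) (Sum.inl b) ↔ G.Adj a b)
    (hne : {v : V | H.Adj (Sum.inr ()) (Sum.inl v)} ≠ ∅)
    (hnu : {v : V | H.Adj (Sum.inr ()) (Sum.inl v)} ≠ Set.univ)
    (hv : ∀ v : V,
      {w : V | H.Adj (Sum.inr ()) (Sum.inl w)} ≠ G.neighborSet v ∧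
      {w : V | H.Adj (Sum.inr ()) (Sum.inl w)} ≠ insert v (G.neighborSet v)) :
    IsPrimeGraph H := by
  obtain ⟨hcard, hmod⟩ := hG
  constructor
  · have h1 : Nat.card (V ⊕ Unit) = Nat.card V + Nat.card Unit := Nat.card_sum
    simp only [Nat.card_unique] at h1
    omega
  intro M hM
  by_contra hcon
  push_neg at hcon
  obtain ⟨hMu, hMs⟩ := hcon
  set α : V ⊕ Unit := Sum.inr () with hαdef
  set M' : Set V := {v | Sum.inl v ∈ M} with hM'def
  have hM' : IsModule G M' := by
    intro v hv'
    rcases hM (Sum.inl v) hv' with h | h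
    · exact Or.inl fun m hm => (hext v m).1 (h (Sum.inl m) hm)
    · exact Or.inr fun m hm hadj => h (Sum.inl m) hm ((hext v m).2 hadj)
  rcases hmod M' hM' with h1 | h1
  · by_cases hα : α ∈ M
    · apply hMu
      ext x
      simp only [Set.mem_univ, iff_true]
      cases x with
      | inl v => exact show v ∈ M' from h1.symm ▸ Set.mem_univ v
      | inr u => cases u; exact hα
    · rcases hM α hα with h | h
      · exact hnu (Set.eq_univ_of_forall fun w =>
          h (Sum.inl w) (show w ∈ M' from h1 ▸ Set.mem_univ w))
      · apply hne
        ext w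
        simp only [Set.mem_setOf_eq, Set.mem_empty_iff_false, iff_false]
        exact h (Sum.inl w) (show w ∈ M' from h1 ▸ Set.mem_univ w)
  · -- M' subsingleton
    by_cases hα : α ∈ M
    · -- M not subsingleton so there is inl v ∈ M
      obtain ⟨x, hx, y, hy, hxy⟩ := hMs
      have hvex : ∃ v : V, v ∈ M' := by
        cases x with
        | inl a => exact ⟨a, hx⟩
        | inr u =>
          cases u
          cases y with
          | inl b => exact ⟨b, hy⟩
          | inr w => cases w; exact absurd rfl hxy
      obtain ⟨v, hvM⟩ := hvex
      -- M = {α, inl v}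
      have key : ∀ u : V, u ≠ v → (u ∈ {w : V | H.Adj α (Sum.inl w)} ↔ G.Adj v u) := by
        intro u huv
        have huM : Sum.inl u ∉ M := fun h => huv (h1 h hvM)
        rcases hM (Sum.inl u) huM with h | h
        · constructor
          · intro _; exact ((hext u v).1 (h (Sum.inl v) hvM)).symm
          · intro _; exact (h α hα).symm
        · constructor
          · intro hu; exact absurd hu.symm (h α hα)
          · intro hadj; exact absurd ((hext u v).2 hadj.symm) (h (Sum.inl v) hvM)
      by_cases hvN : v ∈ {w : V | H.Adj α (Sum.inl w)}
      · apply (hv v).2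
        ext w
        simp only [Set.mem_insert_iff, SimpleGraph.mem_neighborSet]
        by_cases hwv : w = v
        · subst hwv; simp [hvN]
        · simp only [hwv, false_or]
          exact key w hwv
      · apply (hv v).1
        ext w
        simp only [SimpleGraph.mem_neighborSet]
        by_cases hwv : w = v
        · subst hwv
          simp only [Set.mem_setOf_eq] at hvN
          simp [hvN]
        · exact key w hwv
    · -- M ⊆ inl '' M', subsingleton, contradiction
      apply Set.not_subsingleton_iff.mpr hMs
      intro x hx y hy
      have hx' : ∃ a, x = Sum.inl a ∧ a ∈ M' := by
        cases x with
        | inl a => exact ⟨a, rfl, hx⟩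
        | inr u => cases u; exact absurd hx hα
      have hy' : ∃ a, y = Sum.inl a ∧ a ∈ M' := by
        cases y with
        | inl a => exact ⟨a, rfl, hy⟩
        | inr u => cases u; exact absurd hy hα
      obtain ⟨a, rfl, ha⟩ := hx'
      obtain ⟨b, rfl, hb⟩ := hy'
      rw [h1 ha hb]
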